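/- Let σ ∈ V_ℂ satisfy b(σ,σ) = 0 and b(σ,σ̄) > 0, let λ ∈ ℂ be nonzero, and let B, ω ∈ V with b(ω,ω) > 0. Set φ = (0, σ, 0) and φ' = λ·e^{B+iω} in W_ℂ. Then φ' is a hyperKähler structure for φ, i.e., the planes P_φ and P_{φ'} are pointwise orthogonal with respect to the Mukai pairing and ⟨φ, φ̄⟩ = ⟨φ', φ̄'⟩, if and only if b(σ,B) = 0, b(σ,ω) = 0, and 2·|λ|²·b(ω,ω) = b(σ, σ̄). -/

import Mathlib

noncomputable section

/-- ℂ-bilinear extension of `b` to `V_ℂ = V × V` (a pair `(x, y)` represents `x + i y`). -/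
def bC {V : Type*} [AddCommGroup V] [Module ℝ V]
    (b : V →ₗ[ℝ] V →ₗ[ℝ] ℝ) (φ ψ : V × V) : ℂ :=
  ⟨b φ.1 ψ.1 - b φ.2 ψ.2, b φ.1 ψ.2 + b φ.2 ψ.1⟩

/-- Complex conjugation on `V_ℂ = V × V`. -/
def conjV {V : Type*} [AddCommGroup V] [Module ℝ V] (φ : V × V) : V × V :=
  (φ.1, -φ.2)

/-- The ℂ-bilinear Mukai pairing on `W_ℂ = ℂ × V_ℂ × ℂ`. -/
def mukaiC {V : Type*} [AddCommGroup V] [Module ℝ V]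
    (b : V →ₗ[ℝ] V →ₗ[ℝ] ℝ) (w w' : ℂ × (V × V) × ℂ) : ℂ :=
  bC b w.2.1 w'.2.1 - w.1 * w'.2.2 - w.2.2 * w'.1

/-- Complex conjugation on `W_ℂ = ℂ × V_ℂ × ℂ`. -/
def conjW {V : Type*} [AddCommGroup V] [Module ℝ V]
    (w : ℂ × (V × V) × ℂ) : ℂ × (V × V) × ℂ :=
  ((starRingEnd ℂ) w.1, conjV w.2.1, (starRingEnd ℂ) w.2.2)

/-- Scalar multiplication by `λ ∈ ℂ` on `V_ℂ = V × V`. -/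
def csmul {V : Type*} [AddCommGroup V] [Module ℝ V] (lam : ℂ) (x : V × V) : V × V :=
  (lam.re • x.1 - lam.im • x.2, lam.re • x.2 + lam.im • x.1)

/-- Scalar multiplication by `λ ∈ ℂ` on `W_ℂ = ℂ × V_ℂ × ℂ`. -/
def smulW {V : Type*} [AddCommGroup V] [Module ℝ V]
    (lam : ℂ) (w : ℂ × (V × V) × ℂ) : ℂ × (V × V) × ℂ :=
  (lam * w.1, csmul lam w.2.1, lam * w.2.2)

/-- `e^{B+iω} = (1, B+iω, ½(b(B,B)−b(ω,ω)) + i·b(B,ω)) ∈ W_ℂ` for `B, ω ∈ V`. -/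
def expB {V : Type*} [AddCommGroup V] [Module ℝ V]
    (b : V →ₗ[ℝ] V →ₗ[ℝ] ℝ) (B ω : V) : ℂ × (V × V) × ℂ :=
  (1, (B, ω), ⟨(b B B - b ω ω) / 2, b B ω⟩)

/-- The Mukai pairing on `W = ℝ × V × ℝ`. -/
def mukai {V : Type*} [AddCommGroup V] [Module ℝ V]
    (b : V →ₗ[ℝ] V →ₗ[ℝ] ℝ) (w w' : ℝ × V × ℝ) : ℝ :=
  b w.2.1 w'.2.1 - w.1 * w'.2.2 - w.2.2 * w'.1

/-- The real part of `ψ ∈ W_ℂ`, an element of `W = ℝ × V × ℝ`. -/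
def ReW {V : Type*} [AddCommGroup V] [Module ℝ V]
    (w : ℂ × (V × V) × ℂ) : ℝ × V × ℝ :=
  (w.1.re, w.2.1.1, w.2.2.re)

/-- The imaginary part of `ψ ∈ W_ℂ`, an element of `W = ℝ × V × ℝ`. -/
def ImW {V : Type*} [AddCommGroup V] [Module ℝ V]
    (w : ℂ × (V × V) × ℂ) : ℝ × V × ℝ :=
  (w.1.im, w.2.1.2, w.2.2.im)

/-- The real plane `P_ψ = ℝ·Re ψ + ℝ·Im ψ ⊆ W` of `ψ ∈ W_ℂ`. -/
def PW {V : Type*} [AddCommGroup V] [Module ℝ V]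
    (w : ℂ × (V × V) × ℂ) : Submodule ℝ (ℝ × V × ℝ) :=
  Submodule.span ℝ {ReW w, ImW w}

/-- `P_ψ` and `P_{ψ'}` are pointwise orthogonal for the Mukai pairing. -/
def PointwiseOrth {V : Type*} [AddCommGroup V] [Module ℝ V]
    (b : V →ₗ[ℝ] V →ₗ[ℝ] ℝ) (w w' : ℂ × (V × V) × ℂ) : Prop :=
  ∀ u ∈ PW w, ∀ v ∈ PW w', mukai b u v = 0

/-!
Let `σ ∈ V_ℂ` with `b(σ,σ) = 0`, `b(σ,σ̄) > 0`, `λ ∈ ℂ` nonzero, `B, ω ∈ V` with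
`b(ω,ω) > 0`. Set `φ = (0,σ,0)` and `φ' = λ·e^{B+iω}`. Then `φ'` is a hyperKähler
structure for `φ` (i.e. `P_φ ⊥ P_{φ'}` pointwise and `⟨φ,φ̄⟩ = ⟨φ',φ̄'⟩`) iff
`b(σ,B) = 0`, `b(σ,ω) = 0`, and `2|λ|²·b(ω,ω) = b(σ,σ̄)`.
-/

/-- The Mukai pairing as a bilinear map. -/
def mukaiL {V : Type*} [AddCommGroup V] [Module ℝ V]
    (b : V →ₗ[ℝ] V →ₗ[ℝ] ℝ) : (ℝ × V × ℝ) →ₗ[ℝ] (ℝ × V × ℝ) →ₗ[ℝ] ℝ :=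
  LinearMap.mk₂ ℝ (fun u v => mukai b u v)
    (by intro m₁ m₂ n; simp [mukai, Prod.fst_add, Prod.snd_add]; ring)
    (by intro c m n; simp [mukai, Prod.smul_fst, Prod.smul_snd, smul_eq_mul]; ring)
    (by intro m n₁ n₂; simp [mukai, Prod.fst_add, Prod.snd_add]; ring)
    (by intro c m n; simp [mukai, Prod.smul_fst, Prod.smul_snd, smul_eq_mul]; ring)

lemma pointwiseOrth_iff {V : Type*} [AddCommGroup V] [Module ℝ V]
    (b : V →ₗ[ℝ] V →ₗ[ℝ] ℝ) (w w' : ℂ × (V × V) × ℂ) :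
    PointwiseOrth b w w' ↔
      (mukai b (ReW w) (ReW w') = 0 ∧ mukai b (ReW w) (ImW w') = 0 ∧
       mukai b (ImW w) (ReW w') = 0 ∧ mukai b (ImW w) (ImW w') = 0) := by
  constructor
  · intro h
    have h1 : ReW w ∈ PW w := Submodule.subset_span (by simp)
    have h2 : ImW w ∈ PW w := Submodule.subset_span (by simp)
    have h1' : ReW w' ∈ PW w' := Submodule.subset_span (by simp)
    have h2' : ImW w' ∈ PW w' := Submodule.subset_span (by simp)
    exact ⟨h _ h1 _ h1', h _ h1 _ h2', h _ h2 _ h1', h _ h2 _ h2'⟩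
  · rintro ⟨h11, h12, h21, h22⟩ u hu v hv
    have key : ∀ u ∈ PW w, mukaiL b u v = 0 := by
      intro u hu
      have : PW w ≤ LinearMap.ker ((mukaiL b).flip v) := by
        rw [PW, Submodule.span_le]
        rintro x (rfl | rfl)
        · have : PW w' ≤ LinearMap.ker (mukaiL b (ReW w)) := by
            rw [PW, Submodule.span_le]
            rintro y (rfl | rfl) <;> simp [mukaiL, h11, h12]
          simpa [mukaiL] using this hv
        · have : PW w' ≤ LinearMap.ker (mukaiL b (ImW w)) := by
            rw [PW, Submodule.span_le]
            rintro y (rfl | rfl) <;> simp [mukaiL, h21, h22]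
          simpa [mukaiL] using this hv
      simpa using this hu
    simpa [mukaiL] using key u hu

theorem hyperKahler_structure_for_typeB
    {V : Type*} [AddCommGroup V] [Module ℝ V]
    (b : V →ₗ[ℝ] V →ₗ[ℝ] ℝ) (hsymm : ∀ x y : V, b x y = b y x)
    (σ : V × V) (hσ0 : bC b σ σ = 0) (hσpos : 0 < (bC b σ (conjV σ)).re)
    (lam : ℂ) (hlam : lam ≠ 0) (B ω : V) (hω : 0 < b ω ω) :
    (PointwiseOrth b ((0 : ℂ), σ, (0 : ℂ)) (smulW lam (expB b B ω)) ∧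
      mukaiC b ((0 : ℂ), σ, (0 : ℂ)) (conjW ((0 : ℂ), σ, (0 : ℂ)))
        = mukaiC b (smulW lam (expB b B ω)) (conjW (smulW lam (expB b B ω)))) ↔
    (bC b σ (B, (0 : V)) = 0 ∧ bC b σ (ω, (0 : V)) = 0 ∧
      ((2 * ‖lam‖ ^ 2 * b ω ω : ℝ) : ℂ) = bC b σ (conjV σ)) := by
  obtain ⟨σ1, σ2⟩ := σ
  have hrs : lam.re ^ 2 + lam.im ^ 2 ≠ 0 := by
    have h := Complex.normSq_pos.mpr hlam
    rw [Complex.normSq_apply] at h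
    nlinarith
  have habs : ‖lam‖ ^ 2 = lam.re ^ 2 + lam.im ^ 2 := by
    rw [Complex.sq_norm, Complex.normSq_apply]; ring
  have horth : PointwiseOrth b ((0 : ℂ), (σ1, σ2), (0 : ℂ)) (smulW lam (expB b B ω)) ↔
      (b σ1 B = 0 ∧ b σ2 B = 0 ∧ b σ1 ω = 0 ∧ b σ2 ω = 0) := by
    rw [pointwiseOrth_iff]
    simp only [ReW, ImW, smulW, csmul, expB, mukai, map_add, map_sub, map_smul,
      smul_eq_mul, Complex.zero_re, Complex.zero_im, zero_mul, mul_zero, sub_zero]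
    constructor
    · rintro ⟨h11, h12, h21, h22⟩
      refine ⟨?_, ?_, ?_, ?_⟩
      · have : (lam.re ^ 2 + lam.im ^ 2) * b σ1 B = 0 := by
          linear_combination lam.re * h11 + lam.im * h12
        exact (mul_eq_zero.mp this).resolve_left hrs
      · have : (lam.re ^ 2 + lam.im ^ 2) * b σ2 B = 0 := by
          linear_combination lam.re * h21 + lam.im * h22
        exact (mul_eq_zero.mp this).resolve_left hrs
      · have : (lam.re ^ 2 + lam.im ^ 2) * b σ1 ω = 0 := by
          linear_combination lam.re * h12 - lam.im * h11
        exact (mul_eq_zero.mp this).resolve_left hrs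
      · have : (lam.re ^ 2 + lam.im ^ 2) * b σ2 ω = 0 := by
          linear_combination lam.re * h22 - lam.im * h21
        exact (mul_eq_zero.mp this).resolve_left hrs
    · rintro ⟨h1, h2, h3, h4⟩
      refine ⟨?_, ?_, ?_, ?_⟩ <;> simp [h1, h2, h3, h4]
  have hL : mukaiC b ((0 : ℂ), (σ1, σ2), (0 : ℂ)) (conjW ((0 : ℂ), (σ1, σ2), (0 : ℂ)))
      = bC b (σ1, σ2) (conjV (σ1, σ2)) := by
    simp [mukaiC, conjW]
  have hR : mukaiC b (smulW lam (expB b B ω)) (conjW (smulW lam (expB b B ω)))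
      = Complex.mk (2 * (lam.re ^ 2 + lam.im ^ 2) * b ω ω) 0 := by
    have hωB : b ω B = b B ω := hsymm ω B
    simp only [mukaiC, bC, conjW, conjV, smulW, csmul, expB, map_add, map_sub,
      map_smul, map_neg, smul_eq_mul]
    rw [Complex.ext_iff]
    constructor
    · simp [Complex.mul_re, Complex.mul_im]
      ring
    · simp [Complex.mul_re, Complex.mul_im]
      linear_combination (lam.re ^ 2 + lam.im ^ 2) * hωB
  have hB0 : bC b (σ1, σ2) (B, (0 : V)) = Complex.mk (b σ1 B) (b σ2 B) := by
    simp [bC, Complex.ext_iff]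
  have hω0 : bC b (σ1, σ2) (ω, (0 : V)) = Complex.mk (b σ1 ω) (b σ2 ω) := by
    simp [bC, Complex.ext_iff]
  rw [horth, hL, hR, hB0, hω0]
  rw [habs]
  constructor
  · rintro ⟨⟨h1, h2, h3, h4⟩, he⟩
    exact ⟨by simp [Complex.ext_iff, h1, h2], by simp [Complex.ext_iff, h3, h4], he.symm⟩
  · rintro ⟨h1, h2, h3⟩
    rw [Complex.ext_iff] at h1 h2
    simp at h1 h2
    exact ⟨⟨h1.1, h1.2, h2.1, h2.2⟩, h3.symm⟩
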